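/- For every odd integer n ≥ 3, the cycle graph on n vertices is net-zero; equivalently, c_0(C_n) = c_1(C_n) = 2^{n−1}. -/

import Mathlib

attribute [local instance] Classical.propDecidable

/-- The number of 2-colorings (`1` = black) of the vertices of `G` for which the
number of black-black edges is even. -/
noncomputable def colEven {V : Type*} [Fintype V] (G : SimpleGraph V) : ℕ :=
  (Finset.univ.filter fun x : V → Fin 2 =>
    Even (G.edgeFinset.filter fun e => ∀ v ∈ e, x v = 1).card).card

/-- The number of 2-colorings of the vertices of `G` for which the
number of black-black edges is odd. -/
noncomputable def colOdd {V : Type*} [Fintype V] (G : SimpleGraph V) : ℕ :=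
  (Finset.univ.filter fun x : V → Fin 2 =>
    Odd (G.edgeFinset.filter fun e => ∀ v ∈ e, x v = 1).card).card

lemma fin2_flip_flip (a : Fin 2) : 1 - (1 - a) = a := by revert a; decide

lemma flip_eq_one (a : Fin 2) : 1 - a = 1 ↔ a = 0 := by revert a; decide

lemma fin2_cases (a : Fin 2) : a = 0 ∨ a = 1 := by revert a; decide

/-- The black-black edges of the cycle graph are indexed by the `i` with
`x i = 1` and `x (i+1) = 1`. -/
lemma cycle_edge_card (n : ℕ) [NeZero n] (hn : 3 ≤ n) (x : Fin n → Fin 2) :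
    ((SimpleGraph.cycleGraph n).edgeFinset.filter fun e => ∀ v ∈ e, x v = 1).card
      = (Finset.univ.filter fun i : Fin n => x i = 1 ∧ x (i + 1) = 1).card := by
  have hval1 : ((1 : Fin n)).val = 1 := by
    rw [Fin.val_one', Nat.mod_eq_of_lt (by omega)]
  symm
  apply Finset.card_bij (fun i _ => s(i, i + 1))
  · intro i hi
    simp only [Finset.mem_filter, Finset.mem_univ, true_and] at hi
    simp only [Finset.mem_filter, SimpleGraph.mem_edgeFinset, SimpleGraph.mem_edgeSet]
    refine ⟨?_, ?_⟩
    · rw [SimpleGraph.cycleGraph_adj']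
      right
      rw [add_sub_cancel_left, hval1]
    · intro v hv
      rw [Sym2.mem_iff] at hv
      rcases hv with h | h <;> simp [h, hi.1, hi.2]
  · intro i _ j _ h
    rw [Sym2.eq_iff] at h
    rcases h with ⟨h1, _⟩ | ⟨h1, h2⟩
    · exact h1
    · exfalso
      -- h1 : i = j + 1, h2 : i + 1 = j
      have h3 : i + (1 + 1) = i + 0 := by
        rw [← add_assoc, h2, ← h1, add_zero]
      have h4 : (1 + 1 : Fin n) = 0 := add_left_cancel h3
      have h5 : ((1 : Fin n) + 1).val = 0 := by rw [h4, Fin.val_zero]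
      have h6 : ((1 : Fin n) + 1).val = (1 + 1) % n := by rw [Fin.val_add, hval1]
      have h7 : (1 + 1) % n = 2 := Nat.mod_eq_of_lt (by omega)
      omega
  · intro e he
    induction e using Sym2.ind with
    | _ u v =>
      simp only [Finset.mem_filter, SimpleGraph.mem_edgeFinset,
        SimpleGraph.mem_edgeSet] at he
      obtain ⟨hadj, hblack⟩ := he
      rw [SimpleGraph.cycleGraph_adj'] at hadj
      have hx : ∀ w, w = u ∨ w = v → x w = 1 := by
        intro w hw; exact hblack w (Sym2.mem_iff.mpr hw)
      rcases hadj with h | h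
      · -- u - v = 1, i.e. u = v + 1
        have h1 : u - v = 1 := Fin.val_injective (by rw [h, hval1])
        have h2 : u = v + 1 := by rw [sub_eq_iff_eq_add, add_comm] at h1; exact h1
        refine ⟨v, ?_, ?_⟩
        · simp only [Finset.mem_filter, Finset.mem_univ, true_and]
          exact ⟨hx v (Or.inr rfl), by rw [← h2]; exact hx u (Or.inl rfl)⟩
        · rw [← h2]; exact Sym2.eq_swap
      · -- v - u = 1, i.e. v = u + 1
        have h1 : v - u = 1 := Fin.val_injective (by rw [h, hval1])
        have h2 : v = u + 1 := by rw [sub_eq_iff_eq_add, add_comm] at h1; exact h1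
        refine ⟨u, ?_, ?_⟩
        · simp only [Finset.mem_filter, Finset.mem_univ, true_and]
          exact ⟨hx u (Or.inl rfl), by rw [← h2]; exact hx v (Or.inr rfl)⟩
        · rw [← h2]

/-- For an odd cycle, the number of black-black edges of a coloring plus the number of
white-white edges is odd. -/
lemma parity_lemma (n : ℕ) [NeZero n] (hodd : Odd n) (x : Fin n → Fin 2) :
    Odd ((Finset.univ.filter fun i : Fin n => x i = 1 ∧ x (i + 1) = 1).card
       + (Finset.univ.filter fun i : Fin n => x i = 0 ∧ x (i + 1) = 0).card) := by
  set a : Fin n → ZMod 2 := fun i => if x i = 1 then 1 else 0 with ha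
  set A := (Finset.univ.filter fun i : Fin n => x i = 1 ∧ x (i + 1) = 1).card with hA
  set B := (Finset.univ.filter fun i : Fin n => x i = 0 ∧ x (i + 1) = 0).card with hB
  have key : ((A + B : ℕ) : ZMod 2) = 1 := by
    rw [hA, hB, Finset.card_filter, Finset.card_filter]
    push_cast
    have e1 : (∑ i : Fin n, (if x i = 1 ∧ x (i + 1) = 1 then (1 : ZMod 2) else 0))
        = ∑ i : Fin n, a i * a (i + 1) := by
      apply Finset.sum_congr rfl; intro i _
      by_cases h1 : x i = 1 <;> by_cases h2 : x (i + 1) = 1 <;> simp [ha, h1, h2]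
    have e2 : (∑ i : Fin n, (if x i = 0 ∧ x (i + 1) = 0 then (1 : ZMod 2) else 0))
        = ∑ i : Fin n, (1 + a i) * (1 + a (i + 1)) := by
      apply Finset.sum_congr rfl; intro i _
      have hz : (1 + 1 : ZMod 2) = 0 := by decide
      rcases fin2_cases (x i) with h1 | h1 <;> rcases fin2_cases (x (i + 1)) with h2 | h2 <;>
        simp [ha, h1, h2, hz]
    rw [e1, e2, ← Finset.sum_add_distrib]
    have e3 : ∀ i : Fin n, a i * a (i + 1) + (1 + a i) * (1 + a (i + 1))
        = 1 + (a i + a (i + 1)) := by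
      intro i
      have h : ∀ u v : ZMod 2, u * v + (1 + u) * (1 + v) = 1 + (u + v) := by decide
      exact h _ _
    simp_rw [e3]
    rw [Finset.sum_add_distrib, Finset.sum_const, Finset.card_univ, Fintype.card_fin,
      Finset.sum_add_distrib]
    have e4 : (∑ i : Fin n, a (i + 1)) = ∑ i : Fin n, a i :=
      Fintype.sum_equiv (Equiv.addRight (1 : Fin n)) _ _ (fun i => rfl)
    rw [e4, CharTwo.add_self_eq_zero, add_zero, nsmul_eq_mul, mul_one]
    obtain ⟨m, hm⟩ := hodd
    subst hm
    push_cast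
    have h2 : (2 : ZMod 2) = 0 := by decide
    rw [h2, zero_mul, zero_add]
  rcases Nat.even_or_odd (A + B) with h | h
  · exfalso
    obtain ⟨m, hm⟩ := h
    rw [hm] at key
    push_cast at key
    rw [CharTwo.add_self_eq_zero] at key
    exact absurd key (by decide)
  · exact h

theorem stmt_13 (n : ℕ) (hn : 3 ≤ n) (hodd : Odd n) :
    colEven (SimpleGraph.cycleGraph n) = 2 ^ (n - 1) ∧
    colOdd (SimpleGraph.cycleGraph n) = 2 ^ (n - 1) := by
  haveI : NeZero n := ⟨by omega⟩
  have hceq : colEven (SimpleGraph.cycleGraph n)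
      = (Finset.univ.filter fun x : Fin n → Fin 2 =>
          Even (((SimpleGraph.cycleGraph n).edgeFinset.filter
            fun e => ∀ v ∈ e, x v = 1).card)).card := by
    unfold colEven; congr!
  have hoeq : colOdd (SimpleGraph.cycleGraph n)
      = (Finset.univ.filter fun x : Fin n → Fin 2 =>
          Odd (((SimpleGraph.cycleGraph n).edgeFinset.filter
            fun e => ∀ v ∈ e, x v = 1).card)).card := by
    unfold colOdd; congr!
  rw [hceq, hoeq]
  have hpar : ∀ x : Fin n → Fin 2,
      Odd (((SimpleGraph.cycleGraph n).edgeFinset.filter fun e => ∀ v ∈ e, x v = 1).card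
        + ((SimpleGraph.cycleGraph n).edgeFinset.filter fun e => ∀ v ∈ e, 1 - x v = 1).card) := by
    intro x
    rw [cycle_edge_card n hn x, cycle_edge_card n hn (fun v => 1 - x v)]
    have hfc : (Finset.univ.filter fun i : Fin n => 1 - x i = 1 ∧ 1 - x (i + 1) = 1)
        = Finset.univ.filter fun i : Fin n => x i = 0 ∧ x (i + 1) = 0 := by
      apply Finset.filter_congr
      intro i _
      rw [flip_eq_one, flip_eq_one]
    rw [hfc]
    exact parity_lemma n hodd x
  have hEO : (Finset.univ.filter fun x : Fin n → Fin 2 =>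
          Even (((SimpleGraph.cycleGraph n).edgeFinset.filter
            fun e => ∀ v ∈ e, x v = 1).card)).card
      = (Finset.univ.filter fun x : Fin n → Fin 2 =>
          Odd (((SimpleGraph.cycleGraph n).edgeFinset.filter
            fun e => ∀ v ∈ e, x v = 1).card)).card := by
    refine Finset.card_bij' (fun x _ => fun v => 1 - x v) (fun x _ => fun v => 1 - x v)
      ?_ ?_ ?_ ?_
    · intro x hx
      simp only [Finset.mem_filter, Finset.mem_univ, true_and] at hx ⊢
      have h := hpar x
      rw [Nat.even_iff] at hx
      rw [Nat.odd_iff] at h ⊢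
      clear hpar hceq hoeq
      omega
    · intro x hx
      simp only [Finset.mem_filter, Finset.mem_univ, true_and] at hx ⊢
      have h := hpar x
      rw [Nat.odd_iff] at hx h
      rw [Nat.even_iff]
      clear hpar hceq hoeq
      omega
    · intro x _; funext v; exact fin2_flip_flip (x v)
    · intro x _; funext v; exact fin2_flip_flip (x v)
  have hsum : (Finset.univ.filter fun x : Fin n → Fin 2 =>
          Even (((SimpleGraph.cycleGraph n).edgeFinset.filter
            fun e => ∀ v ∈ e, x v = 1).card)).card
      + (Finset.univ.filter fun x : Fin n → Fin 2 =>
          Odd (((SimpleGraph.cycleGraph n).edgeFinset.filter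
            fun e => ∀ v ∈ e, x v = 1).card)).card = 2 ^ n := by
    have hrw : (Finset.univ.filter fun x : Fin n → Fin 2 =>
          Odd (((SimpleGraph.cycleGraph n).edgeFinset.filter
            fun e => ∀ v ∈ e, x v = 1).card))
        = Finset.univ.filter fun x : Fin n → Fin 2 =>
          ¬ Even (((SimpleGraph.cycleGraph n).edgeFinset.filter
            fun e => ∀ v ∈ e, x v = 1).card) := by
      apply Finset.filter_congr
      intro x _
      rw [Nat.not_even_iff_odd]
    rw [hrw, Finset.card_filter_add_card_filter_not, Finset.card_univ]
    rw [Fintype.card_fun, Fintype.card_fin, Fintype.card_fin]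
  have hfinal : ∀ E O : ℕ, E = O → E + O = 2 ^ n → E = 2 ^ (n - 1) ∧ O = 2 ^ (n - 1) := by
    intro E O h1 h2
    have hpow : 2 * 2 ^ (n - 1) = 2 ^ n := by
      rw [← pow_succ', Nat.sub_add_cancel (le_trans (by norm_num) hn)]
    subst h1
    clear * - h2 hpow
    omega
  exact hfinal _ _ hEO hsum
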